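/- For all x, y ∈ ℂ one has θ₄(x|τ/2)·θ₄(y|τ/2) − θ₃(x|τ/2)·θ₃(y|τ/2) = −2·θ₂(x+y|τ)·θ₂(x−y|τ). -/

import Mathlib

/-- Jacobi theta function `θ_a(z|τ)` for `a = 1,2,3,4`. -/
noncomputable def jTheta (a : ℕ) (z τ : ℂ) : ℂ :=
  match a with
  | 1 => -∑' k : ℤ, Complex.exp ((Real.pi : ℂ) * Complex.I * τ * ((k : ℂ) + 1/2)^2
          + 2 * (Real.pi : ℂ) * Complex.I * (z + 1/2) * ((k : ℂ) + 1/2))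
  | 2 => ∑' k : ℤ, Complex.exp ((Real.pi : ℂ) * Complex.I * τ * ((k : ℂ) + 1/2)^2
          + 2 * (Real.pi : ℂ) * Complex.I * z * ((k : ℂ) + 1/2))
  | 3 => ∑' k : ℤ, Complex.exp ((Real.pi : ℂ) * Complex.I * τ * (k : ℂ)^2
          + 2 * (Real.pi : ℂ) * Complex.I * z * (k : ℂ))
  | 4 => ∑' k : ℤ, Complex.exp ((Real.pi : ℂ) * Complex.I * τ * (k : ℂ)^2
          + 2 * (Real.pi : ℂ) * Complex.I * (z + 1/2) * (k : ℂ))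
  | _ => 0

open Complex

noncomputable def T3 (τ z : ℂ) (k : ℤ) : ℂ :=
  Complex.exp ((Real.pi : ℂ) * Complex.I * τ * (k : ℂ)^2
          + 2 * (Real.pi : ℂ) * Complex.I * z * (k : ℂ))

noncomputable def T2 (τ z : ℂ) (k : ℤ) : ℂ :=
  Complex.exp ((Real.pi : ℂ) * Complex.I * τ * ((k : ℂ) + 1/2)^2
          + 2 * (Real.pi : ℂ) * Complex.I * z * ((k : ℂ) + 1/2))

lemma sumT3 {τ : ℂ} (hτ : 0 < τ.im) (z : ℂ) : Summable (T3 τ z) := by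
  refine ((summable_jacobiTheta₂_term_iff z τ).mpr hτ).congr fun k => ?_
  unfold jacobiTheta₂_term T3
  congr 1
  ring

lemma sumT2 {τ : ℂ} (hτ : 0 < τ.im) (z : ℂ) : Summable (T2 τ z) := by
  have h := ((summable_jacobiTheta₂_term_iff (z + τ/2) τ).mpr hτ).mul_left
    (Complex.exp ((Real.pi : ℂ) * Complex.I * τ / 4 + Real.pi * Complex.I * z))
  refine h.congr fun k => ?_
  unfold jacobiTheta₂_term T2
  rw [← Complex.exp_add]
  congr 1
  ring

lemma exp_odd (k : ℤ) : Complex.exp ((Real.pi : ℂ) * Complex.I * (2*k+1)) = -1 := by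
  rw [show (Real.pi : ℂ) * Complex.I * (2*(k:ℂ)+1) = (k:ℤ) * (2*Real.pi*Complex.I)
        + Real.pi * Complex.I by ring,
    Complex.exp_add, Complex.exp_int_mul_two_pi_mul_I, Complex.exp_pi_mul_I]
  ring

/-- For all `x, y ∈ ℂ`:
`θ₄(x|τ/2)·θ₄(y|τ/2) − θ₃(x|τ/2)·θ₃(y|τ/2) = −2·θ₂(x+y|τ)·θ₂(x−y|τ)`. -/
theorem theta_half_period_product' (τ : ℂ) (hτ : 0 < τ.im) (x y : ℂ) :
    jTheta 4 x (τ/2) * jTheta 4 y (τ/2) - jTheta 3 x (τ/2) * jTheta 3 y (τ/2)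
      = -2 * jTheta 2 (x + y) τ * jTheta 2 (x - y) τ := by
  have hτ' : 0 < (τ/2).im := by
    have : (τ/2).im = τ.im / 2 := by
      rw [show (τ/2 : ℂ) = τ * (2⁻¹ : ℝ) by push_cast; ring, Complex.mul_im]
      simp
      ring
    rw [this]; linarith
  -- norm-summability
  have ns3 : ∀ z : ℂ, Summable fun k => ‖T3 (τ/2) z k‖ :=
    fun z => summable_norm_iff.mpr (sumT3 hτ' z)
  have ns2 : ∀ z : ℂ, Summable fun k => ‖T2 τ z k‖ :=
    fun z => summable_norm_iff.mpr (sumT2 hτ z)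
  -- rewrite thetas as sums of T2/T3
  have h4 : ∀ z : ℂ, jTheta 4 z (τ/2) = ∑' k, T3 (τ/2) (z + 1/2) k := fun z => rfl
  have h3 : ∀ z : ℂ, jTheta 3 z (τ/2) = ∑' k, T3 (τ/2) z k := fun z => rfl
  have h2 : ∀ z : ℂ, jTheta 2 z τ = ∑' k, T2 τ z k := fun z => rfl
  set F : ℤ × ℤ → ℂ := fun p =>
    T3 (τ/2) (x + 1/2) p.1 * T3 (τ/2) (y + 1/2) p.2 - T3 (τ/2) x p.1 * T3 (τ/2) y p.2 with hF
  have lhs_eq : jTheta 4 x (τ/2) * jTheta 4 y (τ/2) - jTheta 3 x (τ/2) * jTheta 3 y (τ/2)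
      = ∑' p : ℤ × ℤ, F p := by
    have A := summable_mul_of_summable_norm (ns3 (x + 1/2)) (ns3 (y + 1/2))
    have B := summable_mul_of_summable_norm (ns3 x) (ns3 y)
    rw [h4, h4, h3, h3, tsum_mul_tsum_of_summable_norm (ns3 _) (ns3 _),
      tsum_mul_tsum_of_summable_norm (ns3 _) (ns3 _),
      ← Summable.tsum_sub A B]
  have rhs_eq : -2 * jTheta 2 (x + y) τ * jTheta 2 (x - y) τ
      = ∑' p : ℤ × ℤ, (-2 : ℂ) * (T2 τ (x + y) p.1 * T2 τ (x - y) p.2) := by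
    rw [h2, h2, mul_assoc, tsum_mul_tsum_of_summable_norm (ns2 _) (ns2 _), ← tsum_mul_left]
  -- the reindexing map
  set ι : ℤ × ℤ → ℤ × ℤ := fun p => (p.1 + p.2 + 1, p.1 - p.2) with hι
  have hinj : Function.Injective ι := by
    intro p q h
    simp only [hι, Prod.mk.injEq] at h
    exact Prod.ext (by omega) (by omega)
  have hsupp : Function.support F ⊆ Set.range ι := by
    intro p hp
    rcases Int.even_or_odd (p.1 + p.2) with ⟨t, ht⟩ | ⟨t, ht⟩
    · exfalso
      apply hp
      have hc : ((p.1 : ℂ) + p.2) = 2 * t := by exact_mod_cast (by omega : p.1 + p.2 = 2 * t)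
      simp only [hF, T3]
      rw [← Complex.exp_add, ← Complex.exp_add,
        show (Real.pi : ℂ) * Complex.I * (τ/2) * (p.1 : ℂ)^2
            + 2 * Real.pi * Complex.I * (x + 1/2) * p.1
            + ((Real.pi : ℂ) * Complex.I * (τ/2) * (p.2 : ℂ)^2
            + 2 * Real.pi * Complex.I * (y + 1/2) * p.2)
          = (t : ℤ) * (2 * Real.pi * Complex.I)
            + ((Real.pi : ℂ) * Complex.I * (τ/2) * (p.1 : ℂ)^2
            + 2 * Real.pi * Complex.I * x * p.1
            + ((Real.pi : ℂ) * Complex.I * (τ/2) * (p.2 : ℂ)^2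
            + 2 * Real.pi * Complex.I * y * p.2))
          from by linear_combination (Real.pi : ℂ) * Complex.I * hc,
        Complex.exp_add, Complex.exp_int_mul_two_pi_mul_I, one_mul, sub_self]
    · exact ⟨(t, t - p.2), Prod.ext (by simp [hι]; try omega) (by simp [hι]; try omega)⟩
  have key : ∀ q : ℤ × ℤ, F (ι q) = (-2 : ℂ) * (T2 τ (x + y) q.1 * T2 τ (x - y) q.2) := by
    rintro ⟨k, l⟩
    simp only [hF, hι, T3, T2]
    rw [← Complex.exp_add, ← Complex.exp_add, ← Complex.exp_add,
      show (Real.pi : ℂ) * Complex.I * (τ/2) * ((k + l + 1 : ℤ) : ℂ)^2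
          + 2 * Real.pi * Complex.I * (x + 1/2) * ((k + l + 1 : ℤ) : ℂ)
          + ((Real.pi : ℂ) * Complex.I * (τ/2) * ((k - l : ℤ) : ℂ)^2
          + 2 * Real.pi * Complex.I * (y + 1/2) * ((k - l : ℤ) : ℂ))
        = (Real.pi : ℂ) * Complex.I * (2 * k + 1)
          + ((Real.pi : ℂ) * Complex.I * τ * ((k : ℂ) + 1/2)^2
          + 2 * Real.pi * Complex.I * (x + y) * ((k : ℂ) + 1/2)
          + ((Real.pi : ℂ) * Complex.I * τ * ((l : ℂ) + 1/2)^2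
          + 2 * Real.pi * Complex.I * (x - y) * ((l : ℂ) + 1/2)))
        from by push_cast; try ring
        ,
      show (Real.pi : ℂ) * Complex.I * (τ/2) * ((k + l + 1 : ℤ) : ℂ)^2
          + 2 * Real.pi * Complex.I * x * ((k + l + 1 : ℤ) : ℂ)
          + ((Real.pi : ℂ) * Complex.I * (τ/2) * ((k - l : ℤ) : ℂ)^2
          + 2 * Real.pi * Complex.I * y * ((k - l : ℤ) : ℂ))
        = (Real.pi : ℂ) * Complex.I * τ * ((k : ℂ) + 1/2)^2
          + 2 * Real.pi * Complex.I * (x + y) * ((k : ℂ) + 1/2)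
          + ((Real.pi : ℂ) * Complex.I * τ * ((l : ℂ) + 1/2)^2
          + 2 * Real.pi * Complex.I * (x - y) * ((l : ℂ) + 1/2))
        from by push_cast; try ring
        ,
      Complex.exp_add, exp_odd k]
    ring
  rw [lhs_eq, rhs_eq, ← hinj.tsum_eq hsupp]
  exact tsum_congr key
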